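/- The space of global sections of the vector activation sheaf on a finite link complex has dimension equal to the number of nodes (i.e., H^0 of the vector activation sheaf has dimension |N|), provided every vertex of X appears in some cell. -/
import Mathlib


/-- A finite abstract simplicial complex. -/
def IsComplex {N : Type*} (X : Finset (Finset N)) : Prop :=
  ∀ c ∈ X, c.Nonempty ∧ ∀ b : Finset N, b ⊆ c → b.Nonempty → b ∈ X

/-- `m` is a basis element of the stalk of the vector activation sheaf at `c`:
it shares a coface with `c`. -/
def InStalk {N : Type*} (X : Finset (Finset N)) (c : Finset N) (m : N) : Prop :=
  ∃ d ∈ X, c ⊆ d ∧ m ∈ d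

/-- A global section of the vector activation sheaf, encoded as a function giving the
coefficient of each basis node at each cell: it vanishes off `X`, it is supported on
the stalk's basis, and it is compatible with the restriction maps, which send a basis
node `m` to `m` when `m` is in the basis at the larger cell and to `0` otherwise. -/
def IsVSection {N : Type*} (k : Type*) [Field k]
    (X : Finset (Finset N)) (g : Finset N → N → k) : Prop :=
  (∀ c, c ∉ X → ∀ m, g c m = 0) ∧
  (∀ c ∈ X, ∀ m, ¬ InStalk X c m → g c m = 0) ∧
  (∀ c ∈ X, ∀ d ∈ X, c ⊆ d → ∀ m, InStalk X d m → g d m = g c m) ∧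
  (∀ c ∈ X, ∀ d ∈ X, c ⊆ d → ∀ m, ¬ InStalk X d m → g d m = 0)

/-- The space of global sections `H⁰` of the vector activation sheaf. -/
def secSpace {N : Type*} (k : Type*) [Field k] (X : Finset (Finset N)) :
    Submodule k (Finset N → N → k) where
  carrier := {g | IsVSection k X g}
  zero_mem' := ⟨fun _ _ _ => rfl, fun _ _ _ _ => rfl,
    fun _ _ _ _ _ _ _ => rfl, fun _ _ _ _ _ _ _ => rfl⟩
  add_mem' := fun {a b} ha hb =>
    ⟨fun c hc m => by simp [ha.1 c hc m, hb.1 c hc m],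
     fun c hc m hm => by simp [ha.2.1 c hc m hm, hb.2.1 c hc m hm],
     fun c hc d hd hcd m hm => by
       simp [ha.2.2.1 c hc d hd hcd m hm, hb.2.2.1 c hc d hd hcd m hm],
     fun c hc d hd hcd m hm => by
       simp [ha.2.2.2 c hc d hd hcd m hm, hb.2.2.2 c hc d hd hcd m hm]⟩
  smul_mem' := fun r a ha =>
    ⟨fun c hc m => by simp [ha.1 c hc m],
     fun c hc m hm => by simp [ha.2.1 c hc m hm],
     fun c hc d hd hcd m hm => by simp [ha.2.2.1 c hc d hd hcd m hm],
     fun c hc d hd hcd m hm => by simp [ha.2.2.2 c hc d hd hcd m hm]⟩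

/-- The space of global sections of the vector activation sheaf on a finite link
complex, every node being a vertex, has dimension equal to the number of nodes. -/
theorem dim_H0_vector_activation_sheaf {N : Type*} [Fintype N] [DecidableEq N]
    (k : Type*) [Field k] (X : Finset (Finset N)) (hX : IsComplex X)
    (hvert : ∀ n : N, ({n} : Finset N) ∈ X) :
    Module.finrank k (secSpace k X) = Fintype.card N := by
  classical
  -- every section value is determined by the values at vertex stalks
  have key : ∀ g : Finset N → N → k, IsVSection k X g →
      ∀ c ∈ X, ∀ m, InStalk X c m → g c m = g {m} m := by
    rintro g hg c hc m ⟨d, hd, hcd, hmd⟩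
    have hdm : InStalk X d m := ⟨d, hd, subset_refl d, hmd⟩
    have h1 : g d m = g c m := hg.2.2.1 c hc d hd hcd m hdm
    have h2 : g d m = g {m} m :=
      hg.2.2.1 {m} (hvert m) d hd (Finset.singleton_subset_iff.mpr hmd) m hdm
    rw [← h1, h2]
  set Lf : (N → k) → (Finset N → N → k) :=
    fun f c m => if c ∈ X ∧ InStalk X c m then f m else 0 with hLf
  have hsec : ∀ f, IsVSection k X (Lf f) := by
    intro f
    refine ⟨fun c hc m => by simp [Lf, hc], fun c hc m hm => by simp [Lf, hm], ?_, ?_⟩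
    · intro c hc d hd hcd m hm
      have hcm : InStalk X c m := by
        obtain ⟨e, he, hde, hme⟩ := hm
        exact ⟨e, he, hcd.trans hde, hme⟩
      simp [Lf, hc, hd, hm, hcm]
    · intro c hc d hd hcd m hm
      simp [Lf, hm]
  let L : (N → k) →ₗ[k] secSpace k X :=
    { toFun := fun f => ⟨Lf f, hsec f⟩
      map_add' := fun f g => by
        ext c m
        simp only [Lf, Submodule.coe_add, Pi.add_apply]
        split <;> simp
      map_smul' := fun r f => by
        ext c m
        simp only [Lf, Submodule.coe_smul, Pi.smul_apply, RingHom.id_apply]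
        split <;> simp }
  have hinj : Function.Injective L := by
    intro f g hfg
    funext n
    have hn : ({n} : Finset N) ∈ X ∧ InStalk X ({n} : Finset N) n :=
      ⟨hvert n, ⟨{n}, hvert n, subset_refl _, Finset.mem_singleton_self n⟩⟩
    have := congrFun (congrFun (congrArg Subtype.val hfg) {n}) n
    simpa [L, Lf, hn] using this
  have hsurj : Function.Surjective L := by
    rintro ⟨g, hg⟩
    refine ⟨fun n => g {n} n, ?_⟩
    apply Subtype.ext
    funext c m
    show Lf (fun n => g {n} n) c m = g c m
    by_cases hc : c ∈ X
    · by_cases hm : InStalk X c m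
      · simp only [Lf, hc, hm, and_self, if_true]
        exact (key g hg c hc m hm).symm
      · simp [Lf, hm, hg.2.1 c hc m hm]
    · simp [Lf, hc, hg.1 c hc m]
  have e : (N → k) ≃ₗ[k] secSpace k X := LinearEquiv.ofBijective L ⟨hinj, hsurj⟩
  rw [← e.finrank_eq, Module.finrank_fintype_fun_eq_card]
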